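/- For the lattice of flats of a loopless matroid M viewed as a weakly ranked poset with the characteristic function χ as kernel, the entry H_{∅,M} of the Chow function H = −χ̄^{-1} is a polynomial with nonnegative integer coefficients of degree rk(M) − 1. -/

import Mathlib

open Finset Polynomial


variable {P P₁ P₂ : Type*}

/-- A weak rank function on a poset, in the sense of Brenti/CF25. -/
def IsWeakRank [Preorder P] (rk : P → P → ℤ) : Prop :=
  (∀ s t : P, s < t → 0 < rk s t) ∧
    ∀ s u t : P, s ≤ u → u ≤ t → rk s t = rk s u + rk u t

noncomputable section
open scoped Classical

/-- Membership in the rank-bounded incidence algebra `J_rk(P)`: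
functions on intervals with values in `ℤ[x]` of degree bounded by the rank. -/
def InJ [Preorder P] (rk : P → P → ℤ) (a : P → P → Polynomial ℤ) : Prop :=
  (∀ s t : P, ¬ s ≤ t → a s t = 0) ∧
    ∀ s t : P, s ≤ t → ((a s t).natDegree : ℤ) ≤ rk s t

/-- Convolution product in the incidence algebra. -/
def conv [Fintype P] (a b : P → P → Polynomial ℤ) : P → P → Polynomial ℤ :=
  fun s t => ∑ u : P, a s u * b u t

/-- The identity (delta function) of the incidence algebra. -/
def delta : P → P → Polynomial ℤ := fun s t => if s = t then 1 else 0

/-- The reversal operation `(a^rev)_{s,t} = x^{rk(s,t)}·a_{s,t}(x⁻¹)`. -/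
def rev (rk : P → P → ℤ) (a : P → P → Polynomial ℤ) : P → P → Polynomial ℤ :=
  fun s t => (a s t).reflect (rk s t).toNat

/-- Entrywise tensor product of incidence functions on a product poset. -/
def tensor (a₁ : P₁ → P₁ → Polynomial ℤ) (a₂ : P₂ → P₂ → Polynomial ℤ) :
    P₁ × P₂ → P₁ × P₂ → Polynomial ℤ :=
  fun p q => a₁ p.1 q.1 * a₂ p.2 q.2

/-- The sum rank function on a product poset. -/
def prodRk (rk₁ : P₁ → P₁ → ℤ) (rk₂ : P₂ → P₂ → ℤ) : P₁ × P₂ → P₁ × P₂ → ℤ :=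
  fun p q => rk₁ p.1 q.1 + rk₂ p.2 q.2

/-- A kernel: an element of `J_rk(P)` which is invertible with `κ⁻¹ = κ^rev`. -/
def IsKernel [Preorder P] [Fintype P] (rk : P → P → ℤ) (κ : P → P → Polynomial ℤ) : Prop :=
  InJ rk κ ∧ conv κ (rev rk κ) = delta ∧ conv (rev rk κ) κ = delta

/-- The reduced kernel `κ̄`: `κ̄_{s,s} = -1` and `κ̄_{s,t} = κ_{s,t}/(x-1)` for `s ≠ t`. -/
def IsReducedKernel [Preorder P] (κ κb : P → P → Polynomial ℤ) : Prop :=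
  (∀ s : P, κb s s = -1) ∧ ∀ s t : P, s ≠ t → (X - 1) * κb s t = κ s t

/-- The Chow function `H = -κ̄⁻¹` associated to a reduced kernel `κ̄`. -/
def IsChowFunction [Preorder P] [Fintype P] (κb H : P → P → Polynomial ℤ) : Prop :=
  conv κb H = -delta ∧ conv H κb = -delta

/-- The right KLS function of `(P, κ)`. -/
def IsRightKLS [Preorder P] [Fintype P] (rk : P → P → ℤ)
    (κ f : P → P → Polynomial ℤ) : Prop :=
  InJ rk f ∧ (∀ s : P, f s s = 1) ∧
    (∀ s t : P, s < t → 2 * ((f s t).natDegree : ℤ) < rk s t) ∧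
    rev rk f = conv κ f

/-- The left KLS function of `(P, κ)`. -/
def IsLeftKLS [Preorder P] [Fintype P] (rk : P → P → ℤ)
    (κ g : P → P → Polynomial ℤ) : Prop :=
  InJ rk g ∧ (∀ s : P, g s s = 1) ∧
    (∀ s t : P, s < t → 2 * ((g s t).natDegree : ℤ) < rk s t) ∧
    rev rk g = conv g κ

/-- The zeta function of a poset. -/
def zeta [Preorder P] : P → P → Polynomial ℤ := fun s t => if s ≤ t then 1 else 0

/-- Convolution powers. -/
def convPow [Fintype P] (a : P → P → Polynomial ℤ) : ℕ → P → P → Polynomial ℤ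
  | 0 => delta
  | k + 1 => conv a (convPow a k)

/-- The inverse of a unitriangular element of the incidence algebra,
via the finite geometric series `∑ (I - a)^k`. -/
def invInc [Fintype P] (a : P → P → Polynomial ℤ) : P → P → Polynomial ℤ :=
  ∑ k ∈ Finset.range (Fintype.card P), convPow (delta - a) k

/-- The characteristic function `χ = ζ⁻¹ · ζ^rev` of a weakly ranked poset. -/
def charFn [Preorder P] [Fintype P] (rk : P → P → ℤ) : P → P → Polynomial ℤ :=
  conv (invInc zeta) (rev rk zeta)

/-- The reduced characteristic function `χ̄`. -/
def charFnRed [Preorder P] [Fintype P] (rk : P → P → ℤ) : P → P → Polynomial ℤ :=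
  fun s t => if s = t then -1 else charFn rk s t /ₘ (X - C 1)

/-- The Chow function `H = -χ̄⁻¹` of a weakly ranked poset w.r.t. the characteristic kernel. -/
def chowFn [Preorder P] [Fintype P] (rk : P → P → ℤ) : P → P → Polynomial ℤ :=
  invInc (-(charFnRed rk))

end

open Matroid in
/-- The closure of any set in a matroid is a flat. -/
lemma matroid_closure_flat {α : Type*} (M : Matroid α) (X : Set α) :
    M.IsFlat (M.closure X) := by
  rw [Matroid.closure_def]
  have hne : Nonempty {F : Set α // M.IsFlat F ∧ X ∩ M.E ⊆ F} :=
    ⟨⟨M.E, M.ground_isFlat, Set.inter_subset_right⟩⟩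
  have h := Matroid.IsFlat.iInter
    (Fs := fun F : {F : Set α // M.IsFlat F ∧ X ∩ M.E ⊆ F} => F.1) (fun F => F.2.1)
  convert h using 1
  ext x
  simp [Set.mem_sInter, Set.mem_iInter, Subtype.forall]

/-- The lattice of flats of a matroid, as a poset under inclusion. -/
abbrev Flats {α : Type*} (M : Matroid α) : Type _ := {F : Set α // M.IsFlat F}

noncomputable instance flatsFintype {α : Type*} [Fintype α] (M : Matroid α) :
    Fintype (Flats M) := by classical exact Subtype.fintype _

noncomputable section
open scoped Classical

/-- The rank of a set in a matroid: the largest cardinality of an independent subset. -/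
def matRank {α : Type*} (M : Matroid α) (X : Set α) : ℕ :=
  sSup {n : ℕ | ∃ I : Set α, M.Indep I ∧ I ⊆ X ∧ I.ncard = n}

/-- The weak rank function `rk(F,G) = rk(G) - rk(F)` on the lattice of flats. -/
def flatRk {α : Type*} (M : Matroid α) : Flats M → Flats M → ℤ :=
  fun F G => (matRank M G.1 : ℤ) - (matRank M F.1 : ℤ)

open Matroid in
/-- Contraction of a matroid, defined by duality: `M ／ C = (M✶ ＼ C)✶`. -/
def matContract {α : Type*} (M : Matroid α) (C : Set α) : Matroid α :=
  (M✶ ↾ (M.E \ C))✶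

/-- The Hilbert series of the Chow ring of a matroid: by `CF25`, it is the Chow
polynomial of the lattice of flats w.r.t. the characteristic kernel, i.e. the
entry `H_{∅̄, E}` of the Chow function. -/
def chowHilbert {α : Type*} [Fintype α] (M : Matroid α) : Polynomial ℤ :=
  chowFn (flatRk M) ⟨M.closure ∅, matroid_closure_flat M ∅⟩ ⟨M.E, M.ground_isFlat⟩

/-- The Hilbert series of the augmented Chow ring of a matroid, computed from a
left KLS function `g` of its lattice of flats: the entry `(g^rev · H)_{∅̄, E}`
of the left augmented Chow function. -/
def augChowHilbert {α : Type*} [Fintype α] (M : Matroid α)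
    (g : Flats M → Flats M → Polynomial ℤ) : Polynomial ℤ :=
  conv (rev (flatRk M) g) (chowFn (flatRk M))
    ⟨M.closure ∅, matroid_closure_flat M ∅⟩ ⟨M.E, M.ground_isFlat⟩

end
set_option linter.unusedSectionVars false
set_option linter.unusedSectionVars false
section IncidenceLemmas

open Finset

variable [PartialOrder P] [Fintype P]

open scoped Classical in
theorem conv_assoc (a b c : P → P → Polynomial ℤ) :
    conv (conv a b) c = conv a (conv b c) := by
  funext s t
  simp only [conv, Finset.sum_mul, Finset.mul_sum]
  rw [Finset.sum_comm]
  simp [mul_assoc]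

open scoped Classical in
theorem delta_conv (a : P → P → Polynomial ℤ) : conv delta a = a := by
  funext s t
  simp [conv, delta, ite_mul, Finset.sum_ite_eq]

open scoped Classical in
theorem conv_delta (a : P → P → Polynomial ℤ) : conv a delta = a := by
  funext s t
  simp [conv, delta, mul_ite, Finset.sum_ite_eq']

/-- strictly supported incidence functions -/
def StrictSupp [Preorder P] (a : P → P → Polynomial ℤ) : Prop :=
  ∀ s t : P, a s t ≠ 0 → s < t

open scoped Classical in
theorem convPow_supp {a : P → P → Polynomial ℤ} (ha : StrictSupp a) :
    ∀ k (s t : P), convPow a k s t ≠ 0 →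
      s ≤ t ∧ k ≤ (univ.filter (fun u => s ≤ u ∧ u < t)).card := by
  intro k
  induction k with
  | zero =>
    intro s t h
    simp only [convPow, delta] at h
    split_ifs at h with hst
    · subst hst; exact ⟨le_refl s, Nat.zero_le _⟩
    · simp at h
  | succ k ih =>
    intro s t h
    simp only [convPow, conv] at h
    obtain ⟨u, -, hu⟩ := Finset.exists_ne_zero_of_sum_ne_zero h
    have hau : a s u ≠ 0 := fun h0 => hu (by simp [h0])
    have hck : convPow a k u t ≠ 0 := fun h0 => hu (by simp [h0])
    have hsu : s < u := ha _ _ hau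
    obtain ⟨hut, hk⟩ := ih u t hck
    refine ⟨hsu.le.trans hut, ?_⟩
    have hsub : (univ.filter (fun w => u ≤ w ∧ w < t)) ⊂ (univ.filter (fun w => s ≤ w ∧ w < t)) := by
      refine Finset.ssubset_iff_of_subset ?_ |>.mpr ?_
      · intro w hw
        simp only [Finset.mem_filter, Finset.mem_univ, true_and] at hw ⊢
        exact ⟨hsu.le.trans hw.1, hw.2⟩
      · refine ⟨s, ?_, ?_⟩
        · simp only [Finset.mem_filter, Finset.mem_univ, true_and]
          exact ⟨le_refl s, lt_of_lt_of_le hsu hut⟩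
        · simp only [Finset.mem_filter, Finset.mem_univ, true_and, not_and]
          intro hus
          exact absurd hus hsu.not_ge
    have := Finset.card_lt_card hsub
    omega

end IncidenceLemmas

section Inv
variable [PartialOrder P] [Fintype P]
open scoped Classical

theorem convPow_card {a : P → P → Polynomial ℤ} (ha : StrictSupp a) :
    convPow a (Fintype.card P) = 0 := by
  funext s t
  by_contra h
  obtain ⟨hst, hk⟩ := convPow_supp ha _ s t h
  have hsub : (univ.filter (fun u => s ≤ u ∧ u < t)) ⊆ univ.erase t := by
    intro w hw
    simp only [Finset.mem_filter, Finset.mem_univ, true_and] at hw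
    exact Finset.mem_erase.mpr ⟨hw.2.ne, Finset.mem_univ w⟩
  have := Finset.card_le_card hsub
  rw [Finset.card_erase_of_mem (Finset.mem_univ t)] at this
  have hpos : 0 < Fintype.card P := Fintype.card_pos_iff.mpr ⟨t⟩
  simp only [Finset.card_univ] at this
  omega

theorem convPow_succ' (a : P → P → Polynomial ℤ) (k : ℕ) :
    convPow a (k + 1) = conv (convPow a k) a := by
  induction k with
  | zero => simp [convPow, delta_conv, conv_delta]
  | succ k ih =>
    show conv a (convPow a (k+1)) = _
    rw [ih, ← conv_assoc]
    rw [show conv a (convPow a k) = conv (convPow a k) a from ih]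

theorem conv_sub_right (a b c : P → P → Polynomial ℤ) :
    conv a (b - c) = conv a b - conv a c := by
  funext s t
  simp [conv, mul_sub, Finset.sum_sub_distrib]

theorem conv_sub_left (a b c : P → P → Polynomial ℤ) :
    conv (a - b) c = conv a c - conv b c := by
  funext s t
  simp [conv, sub_mul, Finset.sum_sub_distrib]

theorem invInc_eq_sum_apply (a : P → P → Polynomial ℤ) (s t : P) :
    invInc a s t = ∑ k ∈ Finset.range (Fintype.card P), convPow (delta - a) k s t := by
  simp [invInc]

theorem conv_invInc {a : P → P → Polynomial ℤ} (ha : StrictSupp (delta - a)) :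
    conv a (invInc a) = delta := by
  have key : ∀ s t, conv a (invInc a) s t
      = ∑ k ∈ Finset.range (Fintype.card P), (conv a (convPow (delta - a) k)) s t := by
    intro s t
    simp only [conv, invInc_eq_sum_apply, Finset.mul_sum]
    rw [Finset.sum_comm]
  funext s t
  rw [key]
  have hterm : ∀ k, conv a (convPow (delta - a) k)
      = convPow (delta - a) k - convPow (delta - a) (k + 1) := by
    intro k
    have : a = delta - (delta - a) := by ring
    calc conv a (convPow (delta - a) k)
        = conv (delta - (delta - a)) (convPow (delta - a) k) := by rw [← this]
      _ = _ := by
          rw [conv_sub_left, delta_conv]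
          rfl
  simp only [hterm, Pi.sub_apply]
  rw [Finset.sum_range_sub' (f := fun k => convPow (delta - a) k s t)]
  rw [convPow_card ha]
  simp [convPow]

theorem invInc_conv {a : P → P → Polynomial ℤ} (ha : StrictSupp (delta - a)) :
    conv (invInc a) a = delta := by
  have key : ∀ s t, conv (invInc a) a s t
      = ∑ k ∈ Finset.range (Fintype.card P), (conv (convPow (delta - a) k) a) s t := by
    intro s t
    simp only [conv, invInc_eq_sum_apply, Finset.sum_mul]
    rw [Finset.sum_comm]
  funext s t
  rw [key]
  have hterm : ∀ k, conv (convPow (delta - a) k) a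
      = convPow (delta - a) k - convPow (delta - a) (k + 1) := by
    intro k
    have : a = delta - (delta - a) := by ring
    calc conv (convPow (delta - a) k) a
        = conv (convPow (delta - a) k) (delta - (delta - a)) := by rw [← this]
      _ = _ := by
          rw [conv_sub_right, conv_delta, convPow_succ']
  simp only [hterm, Pi.sub_apply]
  rw [Finset.sum_range_sub' (f := fun k => convPow (delta - a) k s t)]
  rw [convPow_card ha]
  simp [convPow]

end Inv

section CharFn
variable [PartialOrder P] [Fintype P] (rk : P → P → ℤ)
open scoped Classical

theorem rk_self_zero (hrk : IsWeakRank rk) (t : P) : rk t t = 0 := by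
  have := hrk.2 t t t le_rfl le_rfl
  omega

theorem strictSupp_delta_sub_zeta : StrictSupp (delta - zeta : P → P → Polynomial ℤ) := by
  intro s t h
  by_contra hlt
  simp only [Pi.sub_apply, delta, zeta] at h
  by_cases h1 : s = t
  · subst h1; simp at h
  · by_cases h2 : s ≤ t
    · exact hlt (lt_of_le_of_ne h2 h1)
    · simp [h1, h2] at h

theorem invInc_supp {a : P → P → Polynomial ℤ} (ha : StrictSupp (delta - a))
    {s t : P} (h : ¬ s ≤ t) : invInc a s t = 0 := by
  rw [invInc_eq_sum_apply]
  refine Finset.sum_eq_zero fun k _ => ?_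
  by_contra hk
  exact h (convPow_supp ha k s t hk).1

theorem invInc_diag {a : P → P → Polynomial ℤ} (ha : StrictSupp (delta - a))
    (s : P) : invInc a s s = 1 := by
  rw [invInc_eq_sum_apply]
  have hcard : 0 < Fintype.card P := Fintype.card_pos_iff.mpr ⟨s⟩
  rw [Finset.sum_eq_single 0]
  · simp [convPow, delta]
  · intro k _ hk
    by_contra h
    have := (convPow_supp ha k s s h).2
    have hempty : (univ.filter fun u => s ≤ u ∧ u < s) = ∅ := by
      refine Finset.filter_false_of_mem fun u _ => ?_
      rintro ⟨h1, h2⟩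
      exact absurd h1 h2.not_ge
    rw [hempty] at this
    simp at this
    omega
  · intro h
    exact absurd (Finset.mem_range.mpr hcard) h

theorem rev_zeta_eq (s t : P) :
    rev rk zeta s t = if s ≤ t then X ^ (rk s t).toNat else 0 := by
  simp only [rev, zeta]
  split_ifs with h
  · rw [show (1 : Polynomial ℤ) = X ^ 0 by simp, Polynomial.reflect_monomial]
    simp
  · exact Polynomial.reflect_zero

theorem charFn_supp {s t : P} (h : ¬ s ≤ t) : charFn rk s t = 0 := by
  rw [charFn, conv]
  refine Finset.sum_eq_zero fun u _ => ?_
  by_cases hsu : s ≤ u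
  · have hut : ¬ u ≤ t := fun hut => h (hsu.trans hut)
    rw [rev_zeta_eq, if_neg hut, mul_zero]
  · rw [invInc_supp (strictSupp_delta_sub_zeta) hsu, zero_mul]

theorem charFn_diag (hrk : IsWeakRank rk) (t : P) : charFn rk t t = 1 := by
  rw [charFn, conv]
  rw [Finset.sum_eq_single t]
  · rw [invInc_diag (strictSupp_delta_sub_zeta), rev_zeta_eq, if_pos le_rfl,
      rk_self_zero rk hrk]
    simp
  · intro u _ hu
    by_cases htu : t ≤ u
    · have : ¬ u ≤ t := fun h => hu (le_antisymm h htu)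
      rw [rev_zeta_eq, if_neg this, mul_zero]
    · rw [invInc_supp (strictSupp_delta_sub_zeta) htu, zero_mul]
  · simp

theorem zeta_conv_charFn : conv zeta (charFn rk) = rev rk zeta := by
  have h1 : conv (zeta : P → P → Polynomial ℤ) (invInc zeta) = delta :=
    conv_invInc strictSupp_delta_sub_zeta
  rw [charFn, ← conv_assoc, h1, delta_conv]

theorem card_interval_lt {s u t : P} (hsu : s < u) (hut : u ≤ t) :
    (univ.filter fun w => u < w ∧ w ≤ t).card < (univ.filter fun w => s < w ∧ w ≤ t).card := by
  refine Finset.card_lt_card ?_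
  refine Finset.ssubset_iff_of_subset ?_ |>.mpr ?_
  · intro w hw
    simp only [Finset.mem_filter, Finset.mem_univ, true_and] at hw ⊢
    exact ⟨hsu.trans hw.1, hw.2⟩
  · refine ⟨u, ?_, ?_⟩
    · simp only [Finset.mem_filter, Finset.mem_univ, true_and]
      exact ⟨hsu, hut⟩
    · simp only [Finset.mem_filter, Finset.mem_univ, true_and, not_and]
      intro huu
      exact absurd huu (lt_irrefl u)

theorem sum_charFn_eq (s t : P) (hst : s ≤ t) :
    ∑ u ∈ univ.filter (fun u => s ≤ u ∧ u ≤ t), charFn rk u t = X ^ (rk s t).toNat := by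
  have h := congrFun (congrFun (zeta_conv_charFn rk) s) t
  rw [conv] at h
  rw [rev_zeta_eq, if_pos hst] at h
  rw [← h]
  rw [Finset.sum_filter]
  refine Finset.sum_congr rfl fun u _ => ?_
  by_cases hsu : s ≤ u
  · by_cases hut : u ≤ t
    · simp [zeta, hsu, hut]
    · simp [zeta, hsu, charFn_supp rk hut]
  · simp [zeta, hsu]

theorem charFn_eval_one (hrk : IsWeakRank rk) :
    ∀ n (s t : P), (univ.filter fun w => s < w ∧ w ≤ t).card ≤ n → s ≤ t →
      (charFn rk s t).eval 1 = if s = t then 1 else 0 := by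
  intro n
  induction n with
  | zero =>
    intro s t hn hst
    have : s = t := by
      by_contra hne
      have hlt : s < t := lt_of_le_of_ne hst hne
      have : t ∈ univ.filter fun w => s < w ∧ w ≤ t := by
        simp [hlt]
      have := Finset.card_pos.mpr ⟨t, this⟩
      omega
    rw [if_pos this, this, charFn_diag rk hrk]
    simp
  | succ n ih =>
    intro s t hn hst
    by_cases heq : s = t
    · rw [if_pos heq, heq, charFn_diag rk hrk]; simp
    rw [if_neg heq]
    have hlt : s < t := lt_of_le_of_ne hst heq
    have hsum := sum_charFn_eq rk s t hst
    have hev := congrArg (Polynomial.eval (1 : ℤ)) hsum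
    rw [Polynomial.eval_finset_sum, Polynomial.eval_pow, Polynomial.eval_X, one_pow] at hev
    have hmem : s ∈ univ.filter (fun u => s ≤ u ∧ u ≤ t) := by simp [hst]
    rw [← Finset.add_sum_erase _ _ hmem] at hev
    have herase : (univ.filter (fun u => s ≤ u ∧ u ≤ t)).erase s
        = univ.filter (fun w => s < w ∧ w ≤ t) := by
      ext w
      simp only [Finset.mem_erase, Finset.mem_filter, Finset.mem_univ, true_and]
      constructor
      · rintro ⟨hne, h1, h2⟩
        exact ⟨lt_of_le_of_ne h1 (Ne.symm hne), h2⟩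
      · rintro ⟨h1, h2⟩
        exact ⟨(h1.ne).symm, h1.le, h2⟩
    rw [herase] at hev
    have hIH : ∀ w ∈ univ.filter (fun w => s < w ∧ w ≤ t),
        (charFn rk w t).eval 1 = if w = t then 1 else 0 := by
      intro w hw
      simp only [Finset.mem_filter, Finset.mem_univ, true_and] at hw
      refine ih w t ?_ hw.2
      have := card_interval_lt hw.1 hw.2
      omega
    rw [Finset.sum_congr rfl hIH] at hev
    rw [Finset.sum_ite_eq' _ t (fun _ => (1:ℤ))] at hev
    have htmem : t ∈ univ.filter fun w => s < w ∧ w ≤ t := by simp [hlt]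
    rw [if_pos htmem] at hev
    linarith

end CharFn

section CP
variable [PartialOrder P] [Fintype P]
open scoped Classical

/-- `q_{s,t} = x + x^2 + ... + x^{rk(s,t)-1}`. -/
noncomputable def qpoly (rk : P → P → ℤ) (s t : P) : Polynomial ℤ :=
  ∑ i ∈ Finset.Ico 1 (rk s t).toNat, X ^ i

/-- The Chow polynomial, defined by the first-flat recursion. -/
noncomputable def cp (rk : P → P → ℤ) (s t : P) : Polynomial ℤ :=
  if h : s ≤ t then
    1 + ∑ u ∈ (univ.filter fun u => s < u ∧ u ≤ t).attach,
        qpoly rk s u.1 * cp rk u.1 t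
  else 0
termination_by (univ.filter fun u => s < u ∧ u ≤ t).card
decreasing_by
  · have hu := u.2
    simp only [Finset.mem_filter, Finset.mem_univ, true_and] at hu
    exact card_interval_lt hu.1 hu.2

theorem cp_not_le (rk : P → P → ℤ) {s t : P} (h : ¬ s ≤ t) : cp rk s t = 0 := by
  rw [cp, dif_neg h]

theorem cp_eq (rk : P → P → ℤ) {s t : P} (h : s ≤ t) :
    cp rk s t = 1 + ∑ u ∈ (univ.filter fun u => s < u ∧ u ≤ t),
      qpoly rk s u * cp rk u t := by
  rw [cp, dif_pos h, Finset.sum_attach _ (fun u => qpoly rk s u * cp rk u t)]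

theorem cp_diag (rk : P → P → ℤ) (t : P) : cp rk t t = 1 := by
  rw [cp_eq rk le_rfl]
  have : (univ.filter fun u => t < u ∧ u ≤ t) = ∅ := by
    refine Finset.filter_false_of_mem fun u _ => ?_
    rintro ⟨h1, h2⟩
    exact absurd h2 h1.not_ge
  rw [this]
  simp

theorem qpoly_coeff (rk : P → P → ℤ) (s t : P) (k : ℕ) :
    (qpoly rk s t).coeff k = if k ∈ Finset.Ico 1 (rk s t).toNat then 1 else 0 := by
  rw [qpoly, Polynomial.finset_sum_coeff]
  simp only [Polynomial.coeff_X_pow]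
  rw [Finset.sum_ite_eq _ k (fun _ => (1:ℤ))]

theorem qpoly_coeff_nonneg (rk : P → P → ℤ) (s t : P) (k : ℕ) :
    0 ≤ (qpoly rk s t).coeff k := by
  rw [qpoly_coeff]
  split_ifs <;> norm_num

theorem qpoly_natDegree_le (rk : P → P → ℤ) (s t : P) :
    (qpoly rk s t).natDegree ≤ (rk s t).toNat - 1 := by
  refine Polynomial.natDegree_sum_le_of_forall_le _ _ fun i hi => ?_
  simp only [Finset.mem_Ico] at hi
  rw [Polynomial.natDegree_X_pow]
  omega

theorem geom_qpoly (d : ℕ) (hd : 1 ≤ d) :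
    (X - 1) * ∑ i ∈ Finset.Ico 1 d, (X:Polynomial ℤ) ^ i = X ^ d - X := by
  induction d with
  | zero => omega
  | succ d ih =>
    rcases Nat.lt_or_ge d 1 with hd1 | hd1
    · interval_cases d
      simp
    · rw [Finset.sum_Ico_succ_top hd1, mul_add, ih hd1]
      ring

theorem mul_coeff_nonneg {p q : Polynomial ℤ} (hp : ∀ k, 0 ≤ p.coeff k)
    (hq : ∀ k, 0 ≤ q.coeff k) (k : ℕ) : 0 ≤ (p * q).coeff k := by
  rw [Polynomial.coeff_mul]
  exact Finset.sum_nonneg fun x _ => mul_nonneg (hp _) (hq _)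

theorem cp_coeff_nonneg (rk : P → P → ℤ) : ∀ n (s t : P),
    (univ.filter fun w => s < w ∧ w ≤ t).card ≤ n → ∀ k, 0 ≤ (cp rk s t).coeff k := by
  intro n
  induction n with
  | zero =>
    intro s t hn k
    by_cases h : s ≤ t
    · rw [cp_eq rk h]
      have hempty : (univ.filter fun u => s < u ∧ u ≤ t) = ∅ :=
        Finset.card_eq_zero.mp (Nat.le_zero.mp hn)
      rw [hempty]
      simp only [Finset.sum_empty, add_zero, Polynomial.coeff_one]
      split_ifs <;> norm_num
    · rw [cp_not_le rk h]; simp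
  | succ n ih =>
    intro s t hn k
    by_cases h : s ≤ t
    · rw [cp_eq rk h, Polynomial.coeff_add, Polynomial.finset_sum_coeff]
      refine add_nonneg ?_ (Finset.sum_nonneg fun u hu => ?_)
      · rw [Polynomial.coeff_one]; split_ifs <;> norm_num
      · simp only [Finset.mem_filter, Finset.mem_univ, true_and] at hu
        refine mul_coeff_nonneg (qpoly_coeff_nonneg rk s u) (fun k' => ?_) k
        refine ih u t ?_ k'
        have := card_interval_lt hu.1 hu.2
        omega
    · rw [cp_not_le rk h]; simp

theorem cp_coeff_nonneg' (rk : P → P → ℤ) (s t : P) (k : ℕ) :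
    0 ≤ (cp rk s t).coeff k :=
  cp_coeff_nonneg rk _ s t le_rfl k

end CP

section Key
variable [PartialOrder P] [Fintype P] (rk : P → P → ℤ)
open scoped Classical

theorem rk_nonneg (hrk : IsWeakRank rk) {s t : P} (h : s ≤ t) : 0 ≤ rk s t := by
  rcases eq_or_lt_of_le h with rfl | hlt
  · rw [rk_self_zero rk hrk]
  · exact (hrk.1 s t hlt).le

theorem rk_toNat_add (hrk : IsWeakRank rk) {s u t : P} (hsu : s ≤ u) (hut : u ≤ t) :
    (rk s t).toNat = (rk s u).toNat + (rk u t).toNat := by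
  have h := hrk.2 s u t hsu hut
  have h1 := rk_nonneg rk hrk hsu
  have h2 := rk_nonneg rk hrk hut
  omega

theorem cp_natDegree_le (hrk : IsWeakRank rk) : ∀ n (s t : P),
    (univ.filter fun w => s < w ∧ w ≤ t).card ≤ n → s ≤ t →
    (cp rk s t).natDegree ≤ (rk s t).toNat - 1 := by
  intro n
  induction n with
  | zero =>
    intro s t hn hst
    rw [cp_eq rk hst, Finset.card_eq_zero.mp (Nat.le_zero.mp hn)]
    simp
  | succ n ih =>
    intro s t hn hst
    rw [cp_eq rk hst]
    refine le_trans (Polynomial.natDegree_add_le _ _) (max_le (by simp) ?_)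
    refine Polynomial.natDegree_sum_le_of_forall_le _ _ fun u hu => ?_
    simp only [Finset.mem_filter, Finset.mem_univ, true_and] at hu
    refine le_trans (Polynomial.natDegree_mul_le) ?_
    have hq := qpoly_natDegree_le rk s u
    have hcp : (cp rk u t).natDegree ≤ (rk u t).toNat - 1 := by
      refine ih u t ?_ hu.2
      have := card_interval_lt hu.1 hu.2
      omega
    have hadd := rk_toNat_add rk hrk hu.1.le hu.2
    have hpos := hrk.1 s u hu.1
    omega

theorem cp_coeff_top (hrk : IsWeakRank rk) {s t : P} (h : s < t) :
    (cp rk s t).coeff ((rk s t).toNat - 1) = 1 := by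
  set d := (rk s t).toNat with hd
  have hd1 : 1 ≤ d := by have := hrk.1 s t h; omega
  rw [cp_eq rk h.le, Polynomial.coeff_add, Polynomial.finset_sum_coeff]
  have htmem : t ∈ univ.filter fun u => s < u ∧ u ≤ t := by simp [h]
  rw [← Finset.add_sum_erase _ _ htmem]
  have hzero : ∀ w ∈ (univ.filter fun u => s < u ∧ u ≤ t).erase t,
      (qpoly rk s w * cp rk w t).coeff (d - 1) = 0 := by
    intro w hw
    obtain ⟨hne, hw⟩ := Finset.mem_erase.mp hw
    simp only [Finset.mem_filter, Finset.mem_univ, true_and] at hw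
    have hwt : w < t := lt_of_le_of_ne hw.2 hne
    have hq := qpoly_natDegree_le rk s w
    have hcp := cp_natDegree_le rk hrk _ w t le_rfl hw.2
    have hadd := rk_toNat_add rk hrk hw.1.le hw.2
    have hp1 := hrk.1 s w hw.1
    have hp2 := hrk.1 w t hwt
    refine Polynomial.coeff_eq_zero_of_natDegree_lt ?_
    refine lt_of_le_of_lt (Polynomial.natDegree_mul_le) ?_
    omega
  rw [Finset.sum_congr rfl hzero, Finset.sum_const, smul_zero]
  rw [cp_diag, mul_one, qpoly_coeff, Polynomial.coeff_one]
  simp only [Finset.mem_Ico, ← hd]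
  rcases Nat.lt_or_ge d 2 with hd2 | hd2
  · have : d = 1 := by omega
    rw [this]
    norm_num
  · rw [if_neg (by omega), if_pos (by omega)]
    norm_num

theorem cp_natDegree (hrk : IsWeakRank rk) {s t : P} (h : s < t) :
    (cp rk s t).natDegree = (rk s t).toNat - 1 := by
  refine le_antisymm (cp_natDegree_le rk hrk _ s t le_rfl h.le) ?_
  refine Polynomial.le_natDegree_of_ne_zero ?_
  rw [cp_coeff_top rk hrk h]
  norm_num

end Key

section Main
variable [PartialOrder P] [Fintype P] (rk : P → P → ℤ)
open scoped Classical

theorem qpoly_geom (hrk : IsWeakRank rk) {s t : P} (h : s < t) :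
    (X - 1) * qpoly rk s t = X ^ (rk s t).toNat - X := by
  rw [qpoly]
  refine geom_qpoly _ ?_
  have := hrk.1 s t h
  omega

theorem cp_conv_charFn_diag (hrk : IsWeakRank rk) (t : P) :
    ∑ u : P, cp rk t u * charFn rk u t = 1 := by
  rw [Finset.sum_eq_single t]
  · rw [cp_diag, charFn_diag rk hrk, mul_one]
  · intro u _ hu
    by_cases htu : t ≤ u
    · have : ¬ u ≤ t := fun hle => hu (le_antisymm htu hle).symm
      rw [charFn_supp rk this, mul_zero]
    · rw [cp_not_le rk htu, zero_mul]
  · simp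

theorem cp_conv_charFn (hrk : IsWeakRank rk) : ∀ n (s t : P),
    (univ.filter fun w => s < w ∧ w ≤ t).card ≤ n → s ≤ t →
    ∑ u : P, cp rk s u * charFn rk u t = if s = t then 1 else X * cp rk s t := by
  intro n
  induction n with
  | zero =>
    intro s t hn hst
    have hst' : s = t := by
      by_contra hne
      have hlt : s < t := lt_of_le_of_ne hst hne
      have : t ∈ univ.filter fun w => s < w ∧ w ≤ t := by simp [hlt]
      have := Finset.card_pos.mpr ⟨t, this⟩
      omega
    rw [if_pos hst', hst']
    exact cp_conv_charFn_diag rk hrk t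
  | succ n ih =>
    intro s t hn hst
    by_cases heq : s = t
    · rw [if_pos heq, heq]
      exact cp_conv_charFn_diag rk hrk t
    rw [if_neg heq]
    have hlt : s < t := lt_of_le_of_ne hst heq
    set A := univ.filter (fun u : P => s ≤ u ∧ u ≤ t) with hA
    set F := univ.filter (fun w : P => s < w ∧ w ≤ t) with hF
    have htF : t ∈ F := by simp [hF, hlt]
    have step1 : ∑ u : P, cp rk s u * charFn rk u t
        = ∑ u ∈ A, cp rk s u * charFn rk u t := by
      refine (Finset.sum_subset (Finset.subset_univ A) fun u _ hu => ?_).symm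
      simp only [hA, Finset.mem_filter, Finset.mem_univ, true_and, not_and] at hu
      by_cases hsu : s ≤ u
      · rw [charFn_supp rk (hu hsu), mul_zero]
      · rw [cp_not_le rk hsu, zero_mul]
    have step2 : ∀ u ∈ A, cp rk s u * charFn rk u t
        = charFn rk u t + ∑ w ∈ univ.filter (fun w : P => s < w ∧ w ≤ u),
            qpoly rk s w * cp rk w u * charFn rk u t := by
      intro u hu
      simp only [hA, Finset.mem_filter, Finset.mem_univ, true_and] at hu
      rw [cp_eq rk hu.1, add_mul, one_mul, Finset.sum_mul]
    rw [step1, Finset.sum_congr rfl step2, Finset.sum_add_distrib]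
    have hA1 : ∑ u ∈ A, charFn rk u t = X ^ (rk s t).toNat := sum_charFn_eq rk s t hst
    have hswap : (∑ u ∈ A, ∑ w ∈ univ.filter (fun w : P => s < w ∧ w ≤ u),
          qpoly rk s w * cp rk w u * charFn rk u t)
        = ∑ w ∈ F, ∑ u : P, qpoly rk s w * cp rk w u * charFn rk u t := by
      rw [hA, hF, Finset.sum_filter, Finset.sum_filter]
      have lhs2 : ∀ u : P, (if s ≤ u ∧ u ≤ t then (∑ w ∈ univ.filter (fun w : P => s < w ∧ w ≤ u),
            qpoly rk s w * cp rk w u * charFn rk u t) else 0)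
          = ∑ w : P, if (s ≤ u ∧ u ≤ t) ∧ (s < w ∧ w ≤ u) then
              qpoly rk s w * cp rk w u * charFn rk u t else 0 := by
        intro u
        rw [Finset.sum_filter]
        split_ifs with h1
        · exact Finset.sum_congr rfl fun w _ => by simp [h1]
        · exact (Finset.sum_eq_zero fun w _ => by simp [h1]).symm
      have rhs2 : ∀ w : P, (if s < w ∧ w ≤ t then (∑ u : P,
            qpoly rk s w * cp rk w u * charFn rk u t) else 0)
          = ∑ u : P, if s < w ∧ w ≤ t then
              qpoly rk s w * cp rk w u * charFn rk u t else 0 := by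
        intro w
        split_ifs with h1 <;> simp
      simp only [lhs2, rhs2]
      rw [Finset.sum_comm]
      refine Finset.sum_congr rfl fun w _ => Finset.sum_congr rfl fun u _ => ?_
      by_cases hc : s < w ∧ w ≤ t
      · rw [if_pos hc]
        by_cases hc1 : (s ≤ u ∧ u ≤ t) ∧ s < w ∧ w ≤ u
        · rw [if_pos hc1]
        · rw [if_neg hc1]
          by_cases hwu : w ≤ u
          · by_cases hut : u ≤ t
            · exact absurd ⟨⟨(hc.1.le.trans hwu), hut⟩, hc.1, hwu⟩ hc1
            · rw [charFn_supp rk hut, mul_zero]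
          · rw [cp_not_le rk hwu, mul_zero, zero_mul]
      · rw [if_neg hc, if_neg]
        rintro ⟨⟨h1, h2⟩, h3, h4⟩
        exact hc ⟨h3, h4.trans h2⟩
    rw [hA1, hswap]
    have hinner : ∀ w ∈ F, (∑ u : P, qpoly rk s w * cp rk w u * charFn rk u t)
        = qpoly rk s w * (if w = t then 1 else X * cp rk w t) := by
      intro w hw
      simp only [hF, Finset.mem_filter, Finset.mem_univ, true_and] at hw
      rw [← ih w t (by have h1 := card_interval_lt hw.1 hw.2; rw [← hF] at h1; omega) hw.2]
      rw [Finset.mul_sum]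
      exact Finset.sum_congr rfl fun u _ => by ring
    rw [Finset.sum_congr rfl hinner]
    rw [← Finset.add_sum_erase _ _ htF, if_pos rfl, mul_one]
    have herase : ∀ w ∈ F.erase t, qpoly rk s w * (if w = t then 1 else X * cp rk w t)
        = X * (qpoly rk s w * cp rk w t) := by
      intro w hw
      rw [if_neg (Finset.mem_erase.mp hw).1]
      ring
    rw [Finset.sum_congr rfl herase]
    rw [cp_eq rk hst, mul_add, mul_one, Finset.mul_sum, ← Finset.add_sum_erase _ _ htF,
      cp_diag, mul_one]
    have hg := qpoly_geom rk hrk hlt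
    linear_combination (-1 : Polynomial ℤ) * hg

end Main

section Red
variable [PartialOrder P] [Fintype P] (rk : P → P → ℤ)
open scoped Classical

theorem charFnRed_diag (t : P) : charFnRed rk t t = -1 := by
  simp [charFnRed]

theorem charFnRed_not_le {s t : P} (hne : s ≠ t) (h : ¬ s ≤ t) :
    charFnRed rk s t = 0 := by
  rw [charFnRed, if_neg hne, charFn_supp rk h, Polynomial.zero_divByMonic]

theorem charFnRed_mul (hrk : IsWeakRank rk) {s t : P} (hne : s ≠ t) :
    (X - Polynomial.C 1) * charFnRed rk s t = charFn rk s t := by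
  rw [charFnRed, if_neg hne]
  by_cases hle : s ≤ t
  · have hroot : Polynomial.IsRoot (charFn rk s t) 1 := by
      rw [Polynomial.IsRoot]
      rw [charFn_eval_one rk hrk _ s t le_rfl hle, if_neg hne]
    have hdvd : (X - Polynomial.C (1:ℤ)) ∣ charFn rk s t :=
      Polynomial.dvd_iff_isRoot.mpr hroot
    have hmod : charFn rk s t %ₘ (X - Polynomial.C 1) = 0 := by
      rw [Polynomial.modByMonic_X_sub_C_eq_C_eval, hroot, map_zero]
    have := Polynomial.modByMonic_add_div (charFn rk s t) (X - Polynomial.C (1:ℤ))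
    rw [hmod, zero_add] at this
    exact this
  · rw [charFn_supp rk hle, Polynomial.zero_divByMonic, mul_zero]

theorem cp_conv_charFnRed (hrk : IsWeakRank rk) :
    conv (cp rk) (-(charFnRed rk)) = delta := by
  funext s t
  rw [conv]
  by_cases hst : s ≤ t
  · rcases eq_or_lt_of_le hst with rfl | hlt
    · rw [Finset.sum_eq_single s]
      · rw [cp_diag]
        simp [charFnRed, delta]
      · intro u _ hu
        by_cases hsu : s ≤ u
        · have hut : ¬ u ≤ s := fun h => hu (le_antisymm h hsu)
          simp only [Pi.neg_apply]
          rw [charFnRed_not_le rk hu hut, neg_zero, mul_zero]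
        · rw [cp_not_le rk hsu, zero_mul]
      · simp
    · have hne : s ≠ t := hlt.ne
      have hkey := cp_conv_charFn rk hrk _ s t le_rfl hst
      rw [if_neg hne] at hkey
      have hmul : (X - Polynomial.C 1) * (∑ u : P, cp rk s u * (-(charFnRed rk)) u t)
          = (X - Polynomial.C 1) * 0 := by
        rw [mul_zero, Finset.mul_sum]
        rw [← Finset.add_sum_erase _ _ (Finset.mem_univ t)]
        have hdiag : (X - Polynomial.C 1) * (cp rk s t * (-(charFnRed rk)) t t)
            = cp rk s t * (X - Polynomial.C 1) := by
          simp only [Pi.neg_apply, charFnRed_diag rk]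
          ring
        have hoff : ∀ u ∈ univ.erase t,
            (X - Polynomial.C 1) * (cp rk s u * (-(charFnRed rk)) u t)
            = -(cp rk s u * charFn rk u t) := by
          intro u hu
          have hu' := (Finset.mem_erase.mp hu).1
          simp only [Pi.neg_apply]
          rw [show (X - Polynomial.C 1) * (cp rk s u * -charFnRed rk u t)
            = -(cp rk s u * ((X - Polynomial.C 1) * charFnRed rk u t)) by ring]
          rw [charFnRed_mul rk hrk hu']
        rw [hdiag, Finset.sum_congr rfl hoff, Finset.sum_neg_distrib]
        have : ∑ u ∈ univ.erase t, cp rk s u * charFn rk u t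
            = (∑ u : P, cp rk s u * charFn rk u t) - cp rk s t * charFn rk t t := by
          rw [Finset.sum_erase_eq_sub (Finset.mem_univ t)]
        rw [this, hkey, charFn_diag rk hrk, Polynomial.C_1]
        ring
      have := mul_left_cancel₀ (Polynomial.X_sub_C_ne_zero (1:ℤ)) hmul
      rw [this, delta, if_neg hne]
  · have hne : s ≠ t := fun h => hst (h ▸ le_rfl)
    rw [delta, if_neg hne]
    refine Finset.sum_eq_zero fun u _ => ?_
    by_cases hsu : s ≤ u
    · have hut : u ≠ t := fun h => hst (h ▸ hsu)
      have hult : ¬ u ≤ t := fun h => hst (hsu.trans h)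
      simp only [Pi.neg_apply]
      rw [charFnRed_not_le rk hut hult, neg_zero, mul_zero]
    · rw [cp_not_le rk hsu, zero_mul]

theorem strictSupp_red : StrictSupp (delta - (-(charFnRed rk)) : P → P → Polynomial ℤ) := by
  intro s t h
  simp only [Pi.sub_apply, Pi.neg_apply, sub_neg_eq_add] at h
  by_cases hne : s = t
  · subst hne
    rw [delta, if_pos rfl, charFnRed, if_pos rfl] at h
    simp at h
  · rw [delta, if_neg hne] at h
    refine lt_of_le_of_ne ?_ hne
    by_contra hle
    rw [charFnRed_not_le rk hne hle] at h
    simp at h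

theorem chowFn_eq_cp (hrk : IsWeakRank rk) : chowFn rk = cp rk := by
  have h1 : conv (-(charFnRed rk)) (chowFn rk) = delta :=
    conv_invInc (strictSupp_red rk)
  have h2 := cp_conv_charFnRed rk hrk
  have h3 : cp rk = chowFn rk := by
    calc cp rk = conv (cp rk) delta := (conv_delta _).symm
      _ = conv (cp rk) (conv (-(charFnRed rk)) (chowFn rk)) := by rw [h1]
      _ = conv (conv (cp rk) (-(charFnRed rk))) (chowFn rk) := (conv_assoc _ _ _).symm
      _ = conv delta (chowFn rk) := by rw [h2]
      _ = chowFn rk := delta_conv _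
  exact h3.symm

end Red

section MatroidRank
variable {α : Type*} [Fintype α] (M : Matroid α)
open scoped Classical

theorem matRank_bddAbove (X : Set α) :
    BddAbove {n : ℕ | ∃ I : Set α, M.Indep I ∧ I ⊆ X ∧ I.ncard = n} := by
  refine ⟨Fintype.card α, fun n hn => ?_⟩
  obtain ⟨I, -, -, rfl⟩ := hn
  calc I.ncard ≤ (Set.univ : Set α).ncard :=
        Set.ncard_le_ncard (Set.subset_univ I) Set.finite_univ
    _ = Fintype.card α := by rw [Set.ncard_univ, Nat.card_eq_fintype_card]

theorem matRank_zero_mem (X : Set α) :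
    0 ∈ {n : ℕ | ∃ I : Set α, M.Indep I ∧ I ⊆ X ∧ I.ncard = n} :=
  ⟨∅, M.empty_indep, Set.empty_subset X, Set.ncard_empty α⟩

theorem le_matRank {I X : Set α} (hI : M.Indep I) (hIX : I ⊆ X) :
    I.ncard ≤ matRank M X :=
  le_csSup (matRank_bddAbove M X) ⟨I, hI, hIX, rfl⟩

theorem matRank_le {X : Set α} {m : ℕ}
    (h : ∀ I : Set α, M.Indep I → I ⊆ X → I.ncard ≤ m) : matRank M X ≤ m := by
  refine csSup_le ⟨0, matRank_zero_mem M X⟩ ?_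
  rintro n ⟨I, hI, hIX, rfl⟩
  exact h I hI hIX

theorem matRank_basis' {I X : Set α} (hI : M.IsBasis' I X) : matRank M X = I.ncard := by
  refine le_antisymm (matRank_le M fun J hJ hJX => ?_) (le_matRank M hI.indep hI.subset)
  obtain ⟨J', hJ', hJJ'⟩ := hJ.subset_isBasis'_of_subset hJX
  have h1 : J.ncard ≤ J'.ncard := Set.ncard_le_ncard hJJ' J'.toFinite
  have h2 : J'.ncard = I.ncard := by
    rw [Set.ncard_def, Set.ncard_def, hJ'.encard_eq_encard hI]
  omega

theorem matRank_empty : matRank M ∅ = 0 := by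
  refine le_antisymm (matRank_le M fun J hJ hJX => ?_) (Nat.zero_le _)
  rw [Set.subset_empty_iff.mp hJX]
  simp

theorem matRank_strictmono {F G : Set α} (hF : M.IsFlat F) (hG : M.IsFlat G)
    (hFG : F ⊂ G) : matRank M F < matRank M G := by
  obtain ⟨I, hI⟩ := M.exists_isBasis F hF.subset_ground
  obtain ⟨e, heG, heF⟩ := Set.exists_of_ssubset hFG
  have heI : e ∉ I := fun h => heF (hI.subset h)
  have hcl : M.closure I = F := by rw [hI.closure_eq_closure, hF.closure]
  have hins : M.Indep (insert e I) := by
    rw [hI.indep.insert_indep_iff_of_notMem heI]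
    exact ⟨hG.subset_ground heG, by rw [hcl]; exact heF⟩
  have h1 : matRank M F = I.ncard := matRank_basis' M hI.isBasis'
  have h2 : (insert e I).ncard = I.ncard + 1 := Set.ncard_insert_of_notMem heI I.toFinite
  have h3 : (insert e I).ncard ≤ matRank M G :=
    le_matRank M hins (Set.insert_subset heG (hI.subset.trans hFG.subset))
  omega

theorem flatRk_isWeakRank : IsWeakRank (flatRk M) := by
  constructor
  · intro s t hst
    have h : s.1 ⊂ t.1 := hst
    have := matRank_strictmono M s.2 t.2 h
    simp only [flatRk]
    omega
  · intro s u t _ _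
    simp only [flatRk]
    ring

end MatroidRank

open scoped Classical in
theorem chowHilbert_nonneg_degree' {α : Type*} [Fintype α]
    (M : Matroid α) (hM : M.closure ∅ = ∅) :
    (∀ k : ℕ, 0 ≤ (chowHilbert M).coeff k) ∧
      (chowHilbert M).natDegree = matRank M M.E - 1 := by
  have hrk := flatRk_isWeakRank M
  set s0 : Flats M := ⟨M.closure ∅, matroid_closure_flat M ∅⟩ with hs0
  set tp : Flats M := ⟨M.E, M.ground_isFlat⟩ with htp
  have hcheq : chowHilbert M = cp (flatRk M) s0 tp := by
    rw [chowHilbert, chowFn_eq_cp _ hrk]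
  have hs0E : s0.1 = (∅ : Set α) := hM
  have hle : s0 ≤ tp := by
    show s0.1 ⊆ tp.1
    rw [hs0E]
    exact Set.empty_subset _
  have h0 : matRank M s0.1 = 0 := by rw [hs0E, matRank_empty]
  constructor
  · intro k
    rw [hcheq]
    exact cp_coeff_nonneg' _ s0 tp k
  · by_cases hR : matRank M M.E = 0
    · have hE : M.E = ∅ := by
        obtain ⟨I, hI⟩ := M.exists_isBasis M.E Set.Subset.rfl
        have hIe : I = ∅ := by
          have := matRank_basis' M hI.isBasis'
          rw [hR] at this
          exact Set.ncard_eq_zero I.toFinite |>.mp this.symm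
        have h1 : M.E ⊆ M.closure M.E := M.subset_closure M.E
        rw [← hI.closure_eq_closure, hIe, hM] at h1
        exact Set.subset_empty_iff.mp h1
      have hst : s0 = tp := by
        refine Subtype.ext ?_
        rw [hs0E]
        show (∅ : Set α) = M.E
        rw [hE]
      rw [hcheq, hst, cp_diag, hR]
      simp
    · have hne : s0 ≠ tp := by
        intro h
        rw [h] at h0
        exact hR h0
      have hlt : s0 < tp := lt_of_le_of_ne hle hne
      rw [hcheq, cp_natDegree _ hrk hlt]
      simp only [flatRk]
      have h1 : matRank M (M.closure ∅) = 0 := by rw [hM, matRank_empty]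
      rw [h1]
      have htpE : matRank M tp.1 = matRank M M.E := rfl
      omega

/-- The Chow polynomial `H_{∅,M}` of the lattice of flats of a loopless matroid (with
respect to the characteristic kernel) has nonnegative integer coefficients and
degree `rk(M) − 1`. -/
theorem chowHilbert_nonneg_degree {α : Type*} [Fintype α]
    (M : Matroid α) (hM : M.closure ∅ = ∅) :
    (∀ k : ℕ, 0 ≤ (chowHilbert M).coeff k) ∧
      (chowHilbert M).natDegree = matRank M M.E - 1 :=
  chowHilbert_nonneg_degree' M hM
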